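/- Let 𝕋³ = (ℝ/ℤ)³ be the flat three-dimensional torus with its Haar (Lebesgue) measure of total mass 1. Let K ≥ 0, R > 0, and let f : 𝕋³ × ℝ³ → [0,∞) be measurable with f ≤ K almost everywhere and such that for almost every x ∈ 𝕋³ the function v ↦ f(x,v) vanishes outside the closed ball B(0,R) ⊂ ℝ³. Then ∫_{𝕋³} (m₁f(x))² dx ≤ (π·K·R⁴)^{3/4} · ((4/3)·π·K + 1)^{5/4} · M₂f. -/

import Mathlib

open MeasureTheory Real
open scoped ENNReal RealInnerProductSpace

noncomputable section

/-- The flat 3-torus `(ℝ/ℤ)³` with its Haar (Lebesgue) probability measure. -/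
abbrev T3 : Type := Fin 3 → AddCircle (1 : ℝ)

/-- Euclidean 3-space with Lebesgue measure. -/
abbrev R3 : Type := EuclideanSpace ℝ (Fin 3)

open Set

lemma gamma_val : Real.Gamma ((3:ℝ) / 2 + 1) = 3 / 4 * Real.sqrt π := by
  rw [Real.Gamma_add_one (by norm_num)]
  rw [show (3:ℝ)/2 = 1/2 + 1 by norm_num, Real.Gamma_add_one (by norm_num), Real.Gamma_one_half_eq]
  ring

lemma vol_unit_ball : (volume (Metric.ball (0:R3) 1)).toReal = 4 / 3 * π := by
  rw [EuclideanSpace.volume_ball]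
  simp only [Fintype.card_fin]
  rw [show ((3:ℕ) : ℝ) / 2 + 1 = (3:ℝ)/2 + 1 by norm_num, gamma_val]
  rw [ENNReal.toReal_mul]
  simp only [ENNReal.ofReal_one, one_pow, ENNReal.toReal_one, one_mul]
  rw [ENNReal.toReal_ofReal (by positivity)]
  rw [show Real.sqrt π ^ 3 = π * Real.sqrt π by
    rw [pow_succ, sq_sqrt Real.pi_nonneg]]
  field_simp

lemma ball_norm_integral (r : ℝ) (hr : 0 ≤ r) :
    ∫ v in Metric.closedBall (0:R3) r, ‖v‖ = π * r ^ 4 := by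
  have h1 : ∫ v in Metric.closedBall (0:R3) r, ‖v‖
      = ∫ v : R3, (fun y : ℝ => if y ≤ r then y else 0) ‖v‖ := by
    rw [← integral_indicator measurableSet_closedBall]
    congr 1
    funext v
    simp only [Set.indicator, Metric.mem_closedBall, dist_zero_right]
  rw [h1, MeasureTheory.integral_fun_norm_addHaar volume (fun y : ℝ => if y ≤ r then y else 0)]
  have hdim : Module.finrank ℝ R3 = 3 := by simp
  rw [hdim, measureReal_def, vol_unit_ball]
  have h2 : ∫ y in Ioi (0:ℝ), y ^ (3 - 1) • (if y ≤ r then y else 0)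
      = ∫ y in Ioc (0:ℝ) r, y ^ 3 := by
    have : ∫ y in Ioi (0:ℝ), y ^ (3 - 1) • (if y ≤ r then y else 0)
        = ∫ y in Ioi (0:ℝ), (Ioc (0:ℝ) r).indicator (fun y => y ^ 3) y := by
      apply setIntegral_congr_fun measurableSet_Ioi
      intro y hy
      simp only [indicator, mem_Ioc, smul_eq_mul]
      by_cases h : y ≤ r
      · simp [h, mem_Ioi.mp hy]; ring
      · simp [h]
    rw [this, setIntegral_indicator measurableSet_Ioc,
      inter_eq_self_of_subset_right Ioc_subset_Ioi_self]
  rw [h2]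
  rw [← intervalIntegral.integral_of_le hr]
  rw [integral_pow]
  simp only [smul_eq_mul, nsmul_eq_mul]
  push_cast
  ring

lemma integrable_norm_pow_mul (K R : ℝ) (hK : 0 ≤ K) (hR : 0 < R) (a : ℕ) (φ : R3 → ℝ)
    (hφm : Measurable φ) (hφ0 : ∀ v, 0 ≤ φ v) (hφK : ∀ᵐ v, φ v ≤ K)
    (hs : ∀ v ∉ Metric.closedBall (0:R3) R, φ v = 0) :
    Integrable (fun v => ‖v‖ ^ a * φ v) := by
  apply Integrable.mono' (g := (Metric.closedBall (0:R3) R).indicator (fun _ => R ^ a * K))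
  · rw [integrable_indicator_iff measurableSet_closedBall]
    exact (integrableOn_const_iff).mpr (Or.inr measure_closedBall_lt_top)
  · exact ((measurable_norm.pow_const a).mul hφm).aestronglyMeasurable
  · filter_upwards [hφK] with v hv
    rw [Real.norm_eq_abs, abs_of_nonneg (mul_nonneg (pow_nonneg (norm_nonneg v) a) (hφ0 v))]
    by_cases hvB : v ∈ Metric.closedBall (0:R3) R
    · rw [indicator_of_mem hvB]
      have hle : ‖v‖ ≤ R := mem_closedBall_zero_iff.mp hvB
      exact mul_le_mul (pow_le_pow_left₀ (norm_nonneg v) hle a) hv (hφ0 v) (by positivity)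
    · rw [indicator_of_notMem hvB, hs v hvB, mul_zero]

lemma indicator_K_integral (K r : ℝ) (hK : 0 ≤ K) (hr : 0 ≤ r) :
    ∫ v : R3, (Metric.closedBall (0:R3) r).indicator (fun v => K * ‖v‖) v
      = K * (π * r ^ 4) := by
  rw [integral_indicator measurableSet_closedBall, MeasureTheory.integral_const_mul, ball_norm_integral r hr]

lemma indicator_K_integrable (K r : ℝ) :
    Integrable (fun v : R3 => (Metric.closedBall (0:R3) r).indicator (fun v => K * ‖v‖) v) := by
  rw [integrable_indicator_iff measurableSet_closedBall]
  exact ((continuous_const.mul continuous_norm).continuousOn).integrableOn_compact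
    (isCompact_closedBall 0 r)

lemma split_bound (K r : ℝ) (hK : 0 ≤ K) (hr : 0 < r) (φ : R3 → ℝ)
    (hφ0 : ∀ v, 0 ≤ φ v) (hφK : ∀ᵐ v, φ v ≤ K)
    (h1 : Integrable (fun v : R3 => ‖v‖ * φ v)) (h2 : Integrable (fun v : R3 => ‖v‖ ^ 2 * φ v)) :
    ∫ v : R3, ‖v‖ * φ v ≤ K * (π * r ^ 4) + (∫ v : R3, ‖v‖ ^ 2 * φ v) / r := by
  have key : ∫ v : R3, ‖v‖ * φ v
      ≤ ∫ v : R3, ((Metric.closedBall (0:R3) r).indicator (fun v => K * ‖v‖) v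
          + ‖v‖ ^ 2 * φ v / r) := by
    apply integral_mono_ae h1 ((indicator_K_integrable K r).add (h2.div_const r))
    filter_upwards [hφK] with v hv
    simp only [Pi.add_apply]
    by_cases hvr : v ∈ Metric.closedBall (0:R3) r
    · rw [indicator_of_mem hvr]
      have : ‖v‖ * φ v ≤ K * ‖v‖ := by
        rw [mul_comm K ‖v‖]
        exact mul_le_mul_of_nonneg_left hv (norm_nonneg v)
      have h2' : 0 ≤ ‖v‖ ^ 2 * φ v / r := div_nonneg (mul_nonneg (pow_nonneg (norm_nonneg v) 2) (hφ0 v)) hr.le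
      linarith
    · rw [indicator_of_notMem hvr, zero_add, le_div_iff₀ hr]
      have hvr' : r ≤ ‖v‖ := by
        simpa [Metric.mem_closedBall, dist_zero_right] using le_of_not_ge (by simpa [Metric.mem_closedBall, dist_zero_right] using hvr)
      nlinarith [hφ0 v, norm_nonneg v, mul_le_mul_of_nonneg_left hvr' (mul_nonneg (norm_nonneg v) (hφ0 v))]
  rw [integral_add (indicator_K_integrable K r) (h2.div_const r)] at key
  rwa [indicator_K_integral K r hK hr.le, integral_div] at key

lemma direct_bound (K R : ℝ) (hK : 0 ≤ K) (hR : 0 < R) (φ : R3 → ℝ)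
    (hφ0 : ∀ v, 0 ≤ φ v) (hφK : ∀ᵐ v, φ v ≤ K)
    (hs : ∀ v ∉ Metric.closedBall (0:R3) R, φ v = 0)
    (h1 : Integrable (fun v : R3 => ‖v‖ * φ v)) :
    ∫ v : R3, ‖v‖ * φ v ≤ K * (π * R ^ 4) := by
  rw [← indicator_K_integral K R hK hR.le]
  apply integral_mono_ae h1 (indicator_K_integrable K R)
  filter_upwards [hφK] with v hv
  by_cases hvB : v ∈ Metric.closedBall (0:R3) R
  · rw [indicator_of_mem hvB, mul_comm K ‖v‖]
    exact mul_le_mul_of_nonneg_left hv (norm_nonneg v)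
  · rw [indicator_of_notMem hvB, hs v hvB, mul_zero]

lemma pointwise_main (K R : ℝ) (hK : 0 ≤ K) (hR : 0 < R) (φ : R3 → ℝ)
    (hφm : Measurable φ) (hφ0 : ∀ v, 0 ≤ φ v) (hφK : ∀ᵐ v, φ v ≤ K)
    (hs : ∀ v ∉ Metric.closedBall (0:R3) R, φ v = 0) :
    (∫ v : R3, ‖v‖ * φ v) ^ 2
      ≤ (π * K * R ^ 4) ^ ((3:ℝ)/4) * ((4/3) * π * K + 1) ^ ((5:ℝ)/4)
        * ∫ v : R3, ‖v‖ ^ 2 * φ v := by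
  have h1 : Integrable (fun v : R3 => ‖v‖ * φ v) := by
    have := integrable_norm_pow_mul K R hK hR 1 φ hφm hφ0 hφK hs
    simpa using this
  have h2 := integrable_norm_pow_mul K R hK hR 2 φ hφm hφ0 hφK hs
  set g := ∫ v : R3, ‖v‖ * φ v with hgdef
  set h := ∫ v : R3, ‖v‖ ^ 2 * φ v with hhdef
  have hg0 : 0 ≤ g := integral_nonneg fun v => mul_nonneg (norm_nonneg v) (hφ0 v)
  have hh0 : 0 ≤ h := integral_nonneg fun v => mul_nonneg (pow_nonneg (norm_nonneg v) 2) (hφ0 v)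
  have hC1 : 0 ≤ π * K * R ^ 4 := by positivity
  have hC2 : (0:ℝ) ≤ (4/3) * π * K + 1 := by positivity
  have hgR : g ≤ π * K * R ^ 4 := by
    have := direct_bound K R hK hR φ hφ0 hφK hs h1
    rw [← hgdef] at this
    linarith
  rcases eq_or_lt_of_le hh0 with hh0' | hhpos
  · have hzero : (fun v : R3 => ‖v‖ ^ 2 * φ v) =ᵐ[volume] 0 :=
      (integral_eq_zero_iff_of_nonneg
        (fun v => mul_nonneg (pow_nonneg (norm_nonneg v) 2) (hφ0 v)) h2).mp hh0'.symm
    have hgz : g = 0 := by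
      rw [hgdef]
      rw [show (0:ℝ) = ∫ _ : R3, (0:ℝ) by simp]
      apply integral_congr_ae
      filter_upwards [hzero] with v hv
      simp only [Pi.zero_apply] at hv ⊢
      rcases mul_eq_zero.mp hv with h' | h'
      · rw [pow_eq_zero_iff two_ne_zero] at h'
        rw [h', zero_mul]
      · rw [h', mul_zero]
    rw [hgz, ← hh0']
    norm_num
  · set r := h ^ ((1:ℝ)/5) with hrdef
    have hrpos : 0 < r := Real.rpow_pos_of_pos hhpos _
    have hsplit := split_bound K r hK hrpos φ hφ0 hφK h1 h2
    rw [← hgdef, ← hhdef] at hsplit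
    have hr4 : r ^ (4:ℕ) = h ^ ((4:ℝ)/5) := by
      rw [hrdef, ← Real.rpow_natCast (h ^ ((1:ℝ)/5)) 4, ← Real.rpow_mul hhpos.le]
      norm_num
    have hdiv : h / r = h ^ ((4:ℝ)/5) := by
      rw [eq_comm, eq_div_iff hrpos.ne', hrdef, ← Real.rpow_add hhpos]
      norm_num
    have h45 : (0:ℝ) ≤ h ^ ((4:ℝ)/5) := Real.rpow_nonneg hh0 _
    have hgC2 : g ≤ ((4/3) * π * K + 1) * h ^ ((4:ℝ)/5) := by
      have : g ≤ π * K * h ^ ((4:ℝ)/5) + h ^ ((4:ℝ)/5) := by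
        calc g ≤ K * (π * r ^ 4) + h / r := hsplit
          _ = π * K * h ^ ((4:ℝ)/5) + h ^ ((4:ℝ)/5) := by rw [hr4, hdiv]; ring
      nlinarith [mul_nonneg (mul_nonneg Real.pi_pos.le hK) h45]
    by_cases hgz : g = 0
    · rw [hgz]
      have : (0:ℝ) ≤ (π * K * R ^ 4) ^ ((3:ℝ)/4) * ((4/3) * π * K + 1) ^ ((5:ℝ)/4) * h :=
        mul_nonneg (mul_nonneg (Real.rpow_nonneg hC1 _) (Real.rpow_nonneg hC2 _)) hh0
      linarith [this]
    · have hgpos : 0 < g := lt_of_le_of_ne hg0 (Ne.symm hgz)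
      have e1 : g ^ ((3:ℝ)/4) * g ^ ((5:ℝ)/4) = g ^ 2 := by
        rw [← Real.rpow_add hgpos, show (3:ℝ)/4 + 5/4 = 2 by norm_num, Real.rpow_two]
      have b1 : g ^ ((3:ℝ)/4) ≤ (π * K * R ^ 4) ^ ((3:ℝ)/4) :=
        Real.rpow_le_rpow hg0 hgR (by norm_num)
      have b2 : g ^ ((5:ℝ)/4) ≤ ((4/3) * π * K + 1) ^ ((5:ℝ)/4) * h := by
        calc g ^ ((5:ℝ)/4) ≤ (((4/3) * π * K + 1) * h ^ ((4:ℝ)/5)) ^ ((5:ℝ)/4) :=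
              Real.rpow_le_rpow hg0 hgC2 (by norm_num)
          _ = ((4/3) * π * K + 1) ^ ((5:ℝ)/4) * (h ^ ((4:ℝ)/5)) ^ ((5:ℝ)/4) :=
              Real.mul_rpow hC2 h45
          _ = ((4/3) * π * K + 1) ^ ((5:ℝ)/4) * h := by
              rw [← Real.rpow_mul hh0]
              norm_num
      calc g ^ 2 = g ^ ((3:ℝ)/4) * g ^ ((5:ℝ)/4) := e1.symm
        _ ≤ (π * K * R ^ 4) ^ ((3:ℝ)/4) * (((4/3) * π * K + 1) ^ ((5:ℝ)/4) * h) :=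
            mul_le_mul b1 b2 (Real.rpow_nonneg hg0 _) (Real.rpow_nonneg hC1 _)
        _ = (π * K * R ^ 4) ^ ((3:ℝ)/4) * ((4/3) * π * K + 1) ^ ((5:ℝ)/4) * h := by ring


/-- If `0 ≤ f ≤ K` a.e. and `f(x,·)` is supported in the ball `B(0,R)` for a.e. x,
then `∫ (m₁f)² dx ≤ (πKR⁴)^{3/4} ((4/3)πK + 1)^{5/4} M₂f`. -/
theorem m1_sq_integral_bound (K R : ℝ) (hK : 0 ≤ K) (hR : 0 < R) (f : T3 × R3 → ℝ)
    (hf_meas : Measurable f)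
    (hf_nonneg : ∀ p, 0 ≤ f p)
    (hf_bdd : ∀ᵐ p ∂(volume : Measure (T3 × R3)), f p ≤ K)
    (hsupp : ∀ᵐ x ∂(volume : Measure T3),
      ∀ v : R3, v ∉ Metric.closedBall (0 : R3) R → f (x, v) = 0) :
    (∫ x : T3, (∫ v : R3, ‖v‖ * f (x, v)) ^ 2)
      ≤ (π * K * R ^ 4) ^ ((3 : ℝ) / 4) *
          ((4 / 3) * π * K + 1) ^ ((5 : ℝ) / 4) *
          ∫ p : T3 × R3, ‖p.2‖ ^ 2 * f p := by
  have hvol : (volume : Measure (T3 × R3)) = (volume : Measure T3).prod (volume : Measure R3) :=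
    rfl
  rw [hvol] at hf_bdd
  have hbd : ∀ᵐ x ∂(volume : Measure T3), ∀ᵐ v ∂(volume : Measure R3), f (x, v) ≤ K :=
    Measure.ae_ae_of_ae_prod hf_bdd
  set C : ℝ := (π * K * R ^ 4) ^ ((3 : ℝ) / 4) * ((4 / 3) * π * K + 1) ^ ((5 : ℝ) / 4) with hC
  have hC0 : 0 ≤ C :=
    mul_nonneg (Real.rpow_nonneg (by positivity) _) (Real.rpow_nonneg (by positivity) _)
  have hFm : Measurable (fun p : T3 × R3 => ‖p.2‖ ^ 2 * f p) :=
    (measurable_snd.norm.pow_const 2).mul hf_meas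
  have hsupp' : ∀ᵐ p ∂((volume : Measure T3).prod (volume : Measure R3)),
      p.2 ∉ Metric.closedBall (0 : R3) R → f p = 0 := by
    have h : ∀ᵐ p ∂((volume : Measure T3).prod (volume : Measure R3)),
        ∀ v ∉ Metric.closedBall (0 : R3) R, f (p.1, v) = 0 :=
      Measure.quasiMeasurePreserving_fst.ae hsupp
    filter_upwards [h] with p hp hmem
    simpa using hp p.2 hmem
  have hFint : Integrable (fun p : T3 × R3 => ‖p.2‖ ^ 2 * f p)
      ((volume : Measure T3).prod (volume : Measure R3)) := by
    apply Integrable.mono'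
      (g := fun p : T3 × R3 =>
        (Set.univ ×ˢ Metric.closedBall (0 : R3) R).indicator (fun _ => R ^ 2 * K) p)
    · rw [integrable_indicator_iff (MeasurableSet.univ.prod measurableSet_closedBall)]
      refine (integrableOn_const_iff).mpr (Or.inr ?_)
      rw [Measure.prod_prod]
      exact ENNReal.mul_lt_top (measure_lt_top _ _) measure_closedBall_lt_top
    · exact hFm.aestronglyMeasurable
    · filter_upwards [hf_bdd, hsupp'] with p hpK hps
      rw [Real.norm_eq_abs,
        abs_of_nonneg (mul_nonneg (pow_nonneg (norm_nonneg _) 2) (hf_nonneg p))]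
      by_cases hmem : p.2 ∈ Metric.closedBall (0 : R3) R
      · rw [Set.indicator_of_mem (Set.mem_prod.mpr ⟨Set.mem_univ _, hmem⟩)]
        exact mul_le_mul (pow_le_pow_left₀ (norm_nonneg _)
          (mem_closedBall_zero_iff.mp hmem) 2) hpK (hf_nonneg p) (by positivity)
      · rw [Set.indicator_of_notMem (fun hc => hmem hc.2), hps hmem, mul_zero]
  have hhint : Integrable (fun x : T3 => ∫ v : R3, ‖v‖ ^ 2 * f (x, v))
      (volume : Measure T3) := hFint.integral_prod_left
  have hae : ∀ᵐ x ∂(volume : Measure T3),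
      (∫ v : R3, ‖v‖ * f (x, v)) ^ 2 ≤ C * ∫ v : R3, ‖v‖ ^ 2 * f (x, v)
      ∧ ‖∫ v : R3, ‖v‖ * f (x, v)‖ ≤ K * (π * R ^ 4) := by
    filter_upwards [hbd, hsupp] with x hxK hxs
    have hφm : Measurable (fun v : R3 => f (x, v)) := hf_meas.comp measurable_prodMk_left
    have hφ0 : ∀ v : R3, 0 ≤ f (x, v) := fun v => hf_nonneg _
    have h1 : Integrable (fun v : R3 => ‖v‖ * f (x, v)) := by
      simpa using integrable_norm_pow_mul K R hK hR 1 _ hφm hφ0 hxK hxs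
    refine ⟨pointwise_main K R hK hR _ hφm hφ0 hxK hxs, ?_⟩
    rw [Real.norm_eq_abs,
      abs_of_nonneg (integral_nonneg fun v => mul_nonneg (norm_nonneg v) (hφ0 v))]
    exact direct_bound K R hK hR _ hφ0 hxK hxs h1
  have hgm : StronglyMeasurable (fun x : T3 => ∫ v : R3, ‖v‖ * f (x, v)) :=
    (measurable_snd.norm.mul hf_meas).stronglyMeasurable.integral_prod_right'
  have hg2int : Integrable (fun x : T3 => (∫ v : R3, ‖v‖ * f (x, v)) ^ 2)
      (volume : Measure T3) := by
    apply Integrable.mono' (g := fun _ : T3 => (K * (π * R ^ 4)) ^ 2) (integrable_const _)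
      ((continuous_pow 2).comp_stronglyMeasurable hgm).aestronglyMeasurable
    filter_upwards [hae] with x hx
    rw [Real.norm_eq_abs, abs_of_nonneg (sq_nonneg _), ← sq_abs]
    exact pow_le_pow_left₀ (abs_nonneg _) hx.2 2
  have step : (∫ x : T3, (∫ v : R3, ‖v‖ * f (x, v)) ^ 2)
      ≤ ∫ x : T3, C * ∫ v : R3, ‖v‖ ^ 2 * f (x, v) := by
    apply integral_mono_ae hg2int (hhint.const_mul C)
    filter_upwards [hae] with x hx using hx.1
  rw [MeasureTheory.integral_const_mul] at step
  have hfub : (∫ x : T3, ∫ v : R3, ‖v‖ ^ 2 * f (x, v)) = ∫ p : T3 × R3, ‖p.2‖ ^ 2 * f p := by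
    rw [hvol]
    exact MeasureTheory.integral_integral hFint
  rw [hfub] at step
  exact step
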